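/- For an appropriate single-item DAG whose arcs encode per-slot decisions (enter cache with age 0, keep with incremented age, or stay out), with arc costs equal to minus the per-slot utility plus dual-price terms, the minimum-cost s–t path cost equals the minimum over all single-item caching columns of minus the reduced-cost objective; equivalently, the maximum reduced-cost column corresponds to a shortest path. -/

import Mathlib

/-- Nodes of the single-item subproblem DAG: `Sum.inl t` is the "not cached" node
`n_t` (end of slot `t`), `Sum.inr (t, a)` is the node `α_{t,a}` (cached in slot `t`
with age `a`). -/
abbrev SPNode := ℕ ⊕ (ℕ × ℕ)

/-- Arcs of the subproblem DAG: stay out (`n_t → n_{t+1}`), download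
(`n_t → α_{t+1,0}`), keep with incremented age (`α_{t,a} → α_{t+1,a+1}`),
and leave the cache (`α_{t,a} → n_t`). -/
def spArc (T : ℕ) : SPNode → SPNode → Prop
  | Sum.inl t, Sum.inl t' => t' = t + 1 ∧ t' ≤ T
  | Sum.inl t, Sum.inr (t', a) => t' = t + 1 ∧ t' ≤ T ∧ a = 0
  | Sum.inr (t, _), Sum.inl t' => t' = t
  | Sum.inr (t, a), Sum.inr (t', a') => t' = t + 1 ∧ t' ≤ T ∧ a' = a + 1

/-- Arc costs: minus the per-slot utility plus dual-price terms. -/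
noncomputable def spCost (f : ℕ → ℝ) (s : ℝ) (pi mu : ℕ → ℝ) :
    SPNode → SPNode → ℝ
  | Sum.inl _, Sum.inl _ => 0
  | Sum.inl _, Sum.inr (t', _) => s * (pi t' + mu t') - f 0
  | Sum.inr _, Sum.inl _ => 0
  | Sum.inr (_, a), Sum.inr (t', _) => s * pi t' - f (a + 1)

/-- Cost of a path (list of nodes). -/
noncomputable def spPathCost (c : SPNode → SPNode → ℝ) : List SPNode → ℝ
  | [] => 0
  | [_] => 0
  | x :: y :: r => c x y + spPathCost c (y :: r)

/-- Age implied by an update indicator. -/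
def spAge (u : ℕ → Bool) : ℕ → ℕ
  | 0 => 0
  | t + 1 => if u (t + 1) then 0 else spAge u t + 1

/-- A feasible single-item column over slots `1,…,T`: updating requires caching, and
being cached requires either an update in the same slot or being cached in the
previous slot. -/
def spFeasCol (T : ℕ) (b u : ℕ → Bool) : Prop :=
  (∀ t, 1 ≤ t → t ≤ T → (u t = true → b t = true)) ∧
  (∀ t, 1 ≤ t → t ≤ T → (b t = true → (u t = true ∨ (2 ≤ t ∧ b (t - 1) = true))))

/-- Reduced-cost objective of a column:
`∑_t f(a_t)·b_t − s·∑_t (π_t b_t + μ_t u_t)`. -/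
noncomputable def spObj (T : ℕ) (f : ℕ → ℝ) (s : ℝ) (pi mu : ℕ → ℝ)
    (b u : ℕ → Bool) : ℝ :=
  ∑ t ∈ Finset.Icc 1 T,
    ((if b t then f (spAge u t) - s * pi t else 0) - if u t then s * mu t else 0)

section Aux

lemma spAge_congr {u u' : ℕ → Bool} :
    ∀ t, (∀ s, 1 ≤ s → s ≤ t → u s = u' s) → spAge u t = spAge u' t := by
  intro t
  induction t with
  | zero => intro _; rfl
  | succ t ih =>
    intro h
    have h1 : u (t + 1) = u' (t + 1) := h _ (Nat.le_add_left _ _) le_rfl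
    simp only [spAge, h1]
    by_cases hc : u' (t + 1) = true
    · simp [hc]
    · simp only [Bool.not_eq_true] at hc
      simp [hc, ih (fun s hs hst => h s hs (hst.trans (Nat.le_succ t)))]

lemma spPathCost_append (c : SPNode → SPNode → ℝ) :
    ∀ (l : List SPNode) (x y : SPNode), l.getLast? = some x →
      spPathCost c (l ++ [y]) = spPathCost c l + c x y := by
  intro l
  induction l with
  | nil => intro x y h; simp at h
  | cons a l ih =>
    intro x y h
    cases l with
    | nil =>
      simp only [List.getLast?_singleton, Option.some.injEq] at h
      subst h
      simp [spPathCost]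
    | cons b l' =>
      have h' : (b :: l').getLast? = some x := by
        rw [List.getLast?_cons_cons] at h; exact h
      have := ih x y h'
      simp only [List.cons_append, List.append_eq, spPathCost] at this ⊢
      rw [this]; ring

lemma path_extend (T : ℕ) (c : SPNode → SPNode → ℝ) (p : List SPNode) (x y : SPNode)
    (hc : List.Chain' (spArc T) p) (hl : p.getLast? = some x) (ha : spArc T x y) :
    List.Chain' (spArc T) (p ++ [y]) ∧ (p ++ [y]).head? = p.head? ∧
      (p ++ [y]).getLast? = some y ∧
      spPathCost c (p ++ [y]) = spPathCost c p + c x y := by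
  have hne : p ≠ [] := by intro h; subst h; simp at hl
  refine ⟨?_, ?_, List.getLast?_concat, spPathCost_append c p x y hl⟩
  · refine List.isChain_append.mpr ?_
    refine ⟨hc, List.isChain_singleton _, ?_⟩
    intro a ha' b hb'
    rw [hl] at ha'
    simp at ha' hb'
    rw [← ha', ← hb'] at *; exact ha
  · rw [List.head?_append]
    cases p with
    | nil => exact absurd rfl hne
    | cons a l => simp

lemma spObj_succ (t : ℕ) (f : ℕ → ℝ) (s : ℝ) (pi mu : ℕ → ℝ) (b u : ℕ → Bool) :
    spObj (t + 1) f s pi mu b u = spObj t f s pi mu b u +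
      ((if b (t + 1) then f (spAge u (t + 1)) - s * pi (t + 1) else 0) -
        if u (t + 1) then s * mu (t + 1) else 0) := by
  unfold spObj
  exact Finset.sum_Icc_succ_top (Nat.succ_le_succ (Nat.zero_le t)) _

lemma spObj_update (t : ℕ) (f : ℕ → ℝ) (s : ℝ) (pi mu : ℕ → ℝ) (b u : ℕ → Bool)
    (vb vu : Bool) :
    spObj t f s pi mu (Function.update b (t + 1) vb) (Function.update u (t + 1) vu)
      = spObj t f s pi mu b u := by
  unfold spObj
  apply Finset.sum_congr rfl
  intro x hx
  simp only [Finset.mem_Icc] at hx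
  have hx1 : x ≠ t + 1 := by omega
  rw [Function.update_of_ne hx1, Function.update_of_ne hx1]
  have : spAge (Function.update u (t + 1) vu) x = spAge u x := by
    apply spAge_congr
    intro s' _ hs2
    exact Function.update_of_ne (by omega) _ _
  rw [this]

lemma spAge_update_same (t : ℕ) (u : ℕ → Bool) (vu : Bool) :
    spAge (Function.update u (t + 1) vu) (t + 1)
      = if vu then 0 else spAge u t + 1 := by
  have h2 : spAge (Function.update u (t + 1) vu) t = spAge u t :=
    spAge_congr t (fun s' _ hs2 => Function.update_of_ne (by omega) _ _)
  cases vu with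
  | true => simp [spAge]
  | false => simp [spAge, h2]

lemma spFeasCol_update (t : ℕ) (b u : ℕ → Bool) (h : spFeasCol t b u) (vb vu : Bool)
    (h1 : vu = true → vb = true)
    (h2 : vb = true → vu = true ∨ (2 ≤ t + 1 ∧ b t = true)) :
    spFeasCol (t + 1) (Function.update b (t + 1) vb) (Function.update u (t + 1) vu) := by
  obtain ⟨hA, hB⟩ := h
  constructor
  · intro t' ht1 ht2
    rcases Nat.lt_or_ge t' (t + 1) with hlt | hge
    · rw [Function.update_of_ne (by omega), Function.update_of_ne (by omega)]
      exact hA t' ht1 (by omega)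
    · have : t' = t + 1 := by omega
      subst this
      rw [Function.update_self, Function.update_self]
      exact h1
  · intro t' ht1 ht2
    rcases Nat.lt_or_ge t' (t + 1) with hlt | hge
    · rw [Function.update_of_ne (by omega), Function.update_of_ne (by omega),
        Function.update_of_ne (by omega)]
      exact hB t' ht1 (by omega)
    · have : t' = t + 1 := by omega
      subst this
      rw [Function.update_self, Function.update_self]
      intro hvb
      rcases h2 hvb with h | ⟨ha, hb'⟩
      · exact Or.inl h
      · refine Or.inr ⟨ha, ?_⟩
        have : t + 1 - 1 = t := by omega
        rw [this, Function.update_of_ne (by omega)]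
        exact hb'

end Aux

lemma path_to_col (T : ℕ) (f : ℕ → ℝ) (s : ℝ) (pi mu : ℕ → ℝ) :
    ∀ p : List SPNode, List.Chain' (spArc T) p → p.head? = some (Sum.inl 0) →
      (∀ t1 : ℕ, p.getLast? = some (Sum.inl t1) →
        ∃ b u : ℕ → Bool, t1 ≤ T ∧ spFeasCol t1 b u ∧
          spPathCost (spCost f s pi mu) p = -(spObj t1 f s pi mu b u)) ∧
      (∀ t1 a1 : ℕ, p.getLast? = some (Sum.inr (t1, a1)) →
        ∃ b u : ℕ → Bool, 1 ≤ t1 ∧ t1 ≤ T ∧ spFeasCol t1 b u ∧ b t1 = true ∧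
          spAge u t1 = a1 ∧
          spPathCost (spCost f s pi mu) p = -(spObj t1 f s pi mu b u)) := by
  intro p
  induction p using List.reverseRecOn with
  | nil => intro _ h; simp at h
  | append_singleton l z ih =>
    intro hchain hhead
    cases l with
    | nil =>
      simp only [List.nil_append] at hchain hhead ⊢
      simp only [List.head?_cons, Option.some.injEq] at hhead
      subst hhead
      constructor
      · intro t1 hlast
        simp only [List.getLast?_singleton, Option.some.injEq, Sum.inl.injEq] at hlast
        subst hlast
        refine ⟨fun _ => false, fun _ => false, Nat.zero_le T,
          ⟨fun t h1 h2 => by omega, fun t h1 h2 => by omega⟩, ?_⟩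
        simp [spPathCost, spObj]
      · intro t1 a1 hlast
        simp at hlast
    | cons a l' =>
      set q : List SPNode := a :: l' with hq
      have hqne : q ≠ [] := by simp [hq]
      have hheadq : q.head? = some (Sum.inl 0) := by
        rw [List.head?_append] at hhead
        simpa [hq] using hhead
      obtain ⟨w, hw⟩ : ∃ w, q.getLast? = some w :=
        ⟨q.getLast hqne, List.getLast?_eq_getLast hqne⟩
      replace hchain := List.isChain_append.mp hchain
      obtain ⟨hcq, -, harc⟩ := hchain
      have harcwz : spArc T w z := harc w (by rw [hw]; rfl) z rfl
      have hcost := spPathCost_append (spCost f s pi mu) q w z hw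
      have hih := ih hcq hheadq
      constructor
      · -- z = Sum.inl t1
        intro t1 hlast
        rw [List.getLast?_concat] at hlast
        injection hlast with hz
        subst hz
        cases w with
        | inl t =>
          -- stay out: t1 = t + 1
          obtain ⟨ht1, hT⟩ : t1 = t + 1 ∧ t1 ≤ T := harcwz
          subst ht1
          obtain ⟨b, u, hTle, hfeas, hco⟩ := hih.1 t hw
          refine ⟨Function.update b (t + 1) false, Function.update u (t + 1) false,
            hT, spFeasCol_update t b u hfeas false false (by simp) (by simp), ?_⟩
          rw [hcost, hco, spObj_succ, spObj_update]
          simp [spCost]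
        | inr ta =>
          obtain ⟨t, a⟩ := ta
          -- leave cache: t1 = t
          have ht1 : t1 = t := harcwz
          subst ht1
          obtain ⟨b, u, h1, hTle, hfeas, hb, hage, hco⟩ := hih.2 t1 a hw
          refine ⟨b, u, hTle, hfeas, ?_⟩
          rw [hcost, hco]
          simp [spCost]
      · -- z = Sum.inr (t1, a1)
        intro t1 a1 hlast
        rw [List.getLast?_concat] at hlast
        injection hlast with hz
        subst hz
        cases w with
        | inl t =>
          -- download: t1 = t + 1, a1 = 0
          obtain ⟨ht1, hT, ha1⟩ : t1 = t + 1 ∧ t1 ≤ T ∧ a1 = 0 := harcwz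
          subst ht1; subst ha1
          obtain ⟨b, u, hTle, hfeas, hco⟩ := hih.1 t hw
          refine ⟨Function.update b (t + 1) true, Function.update u (t + 1) true,
            Nat.succ_le_succ (Nat.zero_le t), hT,
            spFeasCol_update t b u hfeas true true (by simp) (by simp), ?_, ?_, ?_⟩
          · exact Function.update_self _ _ _
          · rw [spAge_update_same]; simp
          · rw [hcost, hco, spObj_succ, spObj_update, spAge_update_same]
            simp only [Function.update_self, if_true, if_pos rfl]
            simp [spCost]
            ring
        | inr ta =>
          obtain ⟨t, a⟩ := ta
          -- keep: t1 = t + 1, a1 = a + 1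
          obtain ⟨ht1, hT, ha1⟩ : t1 = t + 1 ∧ t1 ≤ T ∧ a1 = a + 1 := harcwz
          subst ht1; subst ha1
          obtain ⟨b, u, h1, hTle, hfeas, hb, hage, hco⟩ := hih.2 t a hw
          refine ⟨Function.update b (t + 1) true, Function.update u (t + 1) false,
            Nat.succ_le_succ (Nat.zero_le t), hT,
            spFeasCol_update t b u hfeas true false (by simp)
              (fun _ => Or.inr ⟨by omega, hb⟩), ?_, ?_, ?_⟩
          · exact Function.update_self _ _ _
          · rw [spAge_update_same, hage]; simp
          · rw [hcost, hco, spObj_succ, spObj_update, spAge_update_same, hage]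
            simp only [Function.update_self, if_pos rfl]
            simp [spCost]
            ring

lemma col_to_path (T : ℕ) (f : ℕ → ℝ) (s : ℝ) (pi mu : ℕ → ℝ) (b u : ℕ → Bool)
    (hfeas : spFeasCol T b u) :
    ∀ t1, t1 ≤ T → ∃ p : List SPNode, List.Chain' (spArc T) p ∧
      p.head? = some (Sum.inl 0) ∧
      p.getLast? = some (if 1 ≤ t1 ∧ b t1 = true then Sum.inr (t1, spAge u t1)
        else Sum.inl t1) ∧
      spPathCost (spCost f s pi mu) p = -(spObj t1 f s pi mu b u) := by
  intro t1
  induction t1 with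
  | zero =>
    intro _
    refine ⟨[Sum.inl 0], List.isChain_singleton _, rfl, ?_, ?_⟩
    · simp
    · simp [spPathCost, spObj]
  | succ t ih =>
    intro hle
    obtain ⟨p, hc, hh, hl, hco⟩ := ih (by omega)
    -- normalize: get a path ending at Sum.inl t with same cost
    have key : ∃ p' : List SPNode, List.Chain' (spArc T) p' ∧
        p'.head? = some (Sum.inl 0) ∧ p'.getLast? = some (Sum.inl t) ∧
        spPathCost (spCost f s pi mu) p' = -(spObj t f s pi mu b u) := by
      by_cases hcond : 1 ≤ t ∧ b t = true
      · rw [if_pos hcond] at hl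
        obtain ⟨hc', hh', hl', hco'⟩ := path_extend T (spCost f s pi mu) p _ (Sum.inl t)
          hc hl (by exact rfl)
        refine ⟨p ++ [Sum.inl t], hc', by rw [hh', hh], hl', ?_⟩
        rw [hco', hco]
        simp [spCost]
      · rw [if_neg hcond] at hl
        exact ⟨p, hc, hh, hl, hco⟩
    cases hb : b (t + 1) with
    | false =>
      -- u (t+1) = false by feasibility
      have hu : u (t + 1) = false := by
        cases hu : u (t + 1) with
        | false => rfl
        | true =>
          have := hfeas.1 (t + 1) (by omega) hle hu
          rw [hb] at this; exact absurd this (by simp)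
      obtain ⟨p', hc', hh', hl', hco'⟩ := key
      obtain ⟨hc2, hh2, hl2, hco2⟩ := path_extend T (spCost f s pi mu) p' _
        (Sum.inl (t + 1)) hc' hl' (show spArc T _ _ from ⟨rfl, hle⟩)
      refine ⟨p' ++ [Sum.inl (t + 1)], hc2, by rw [hh2, hh'], ?_, ?_⟩
      · rw [hl2, if_neg (by simp [hb])]
      · rw [hco2, hco', spObj_succ]
        simp [spCost, hb, hu]
    | true =>
      cases hu : u (t + 1) with
      | true =>
        -- download
        obtain ⟨p', hc', hh', hl', hco'⟩ := key
        obtain ⟨hc2, hh2, hl2, hco2⟩ := path_extend T (spCost f s pi mu) p' _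
          (Sum.inr (t + 1, 0)) hc' hl' (show spArc T _ _ from ⟨rfl, hle, rfl⟩)
        have hage : spAge u (t + 1) = 0 := by simp [spAge, hu]
        refine ⟨p' ++ [Sum.inr (t + 1, 0)], hc2, by rw [hh2, hh'], ?_, ?_⟩
        · rw [hl2, if_pos ⟨by omega, rfl⟩, hage]
        · rw [hco2, hco', spObj_succ]
          simp [spCost, hb, hu, hage]
          ring
      | false =>
        -- keep: need b t = true and 1 ≤ t
        have hbt : 2 ≤ t + 1 ∧ b t = true := by
          rcases hfeas.2 (t + 1) (by omega) hle hb with h | h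
          · rw [hu] at h; exact absurd h (by simp)
          · simpa using h
        have hcond : 1 ≤ t ∧ b t = true := ⟨by omega, hbt.2⟩
        rw [if_pos hcond] at hl
        have hage : spAge u (t + 1) = spAge u t + 1 := by simp [spAge, hu]
        obtain ⟨hc2, hh2, hl2, hco2⟩ := path_extend T (spCost f s pi mu) p _
          (Sum.inr (t + 1, spAge u t + 1)) hc hl
          (show spArc T _ _ from ⟨rfl, hle, rfl⟩)
        refine ⟨p ++ [Sum.inr (t + 1, spAge u t + 1)], hc2, by rw [hh2, hh], ?_, ?_⟩
        · rw [hl2, if_pos ⟨by omega, rfl⟩, hage]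
        · rw [hco2, hco, spObj_succ]
          simp [spCost, hb, hu, hage]
          ring

theorem subproblem_is_shortest_path'
    (T : ℕ) (f : ℕ → ℝ) (s : ℝ) (pi mu : ℕ → ℝ) :
    {c : ℝ | ∃ p : List SPNode, List.Chain' (spArc T) p ∧
        p.head? = some (Sum.inl 0) ∧ p.getLast? = some (Sum.inl T) ∧
        spPathCost (spCost f s pi mu) p = c}
      = (fun v => -v) '' {v : ℝ | ∃ b u : ℕ → Bool,
          spFeasCol T b u ∧ spObj T f s pi mu b u = v} := by
  ext c
  constructor
  · rintro ⟨p, hc, hh, hl, rfl⟩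
    obtain ⟨b, u, -, hfeas, hco⟩ := (path_to_col T f s pi mu p hc hh).1 T hl
    exact ⟨spObj T f s pi mu b u, ⟨b, u, hfeas, rfl⟩, by rw [hco]⟩
  · rintro ⟨v, ⟨b, u, hfeas, rfl⟩, rfl⟩
    obtain ⟨p, hc, hh, hl, hco⟩ := col_to_path T f s pi mu b u hfeas T le_rfl
    by_cases hcond : 1 ≤ T ∧ b T = true
    · rw [if_pos hcond] at hl
      obtain ⟨hc2, hh2, hl2, hco2⟩ := path_extend T (spCost f s pi mu) p _ (Sum.inl T)
        hc hl (by exact rfl)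
      refine ⟨p ++ [Sum.inl T], hc2, by rw [hh2, hh], hl2, ?_⟩
      rw [hco2, hco]
      simp [spCost]
    · rw [if_neg hcond] at hl
      exact ⟨p, hc, hh, hl, hco⟩

/-- In the single-item subproblem DAG with arc costs equal to minus the
per-slot utility plus dual-price terms, the set of costs of `n_0`–`n_T` paths is
exactly the set of negated reduced-cost objectives of feasible columns; hence the
minimum-cost path equals the minimum over all columns of minus the reduced-cost
objective, i.e. the maximum reduced-cost column corresponds to a shortest path. -/
theorem subproblem_is_shortest_path
    (T : ℕ) (f : ℕ → ℝ) (s : ℝ) (pi mu : ℕ → ℝ) :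
    {c : ℝ | ∃ p : List SPNode, List.Chain' (spArc T) p ∧
        p.head? = some (Sum.inl 0) ∧ p.getLast? = some (Sum.inl T) ∧
        spPathCost (spCost f s pi mu) p = c}
      = (fun v => -v) '' {v : ℝ | ∃ b u : ℕ → Bool,
          spFeasCol T b u ∧ spObj T f s pi mu b u = v} := by
  exact subproblem_is_shortest_path' T f s pi mu
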